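/- Let A and B be real symmetric n×n matrices with eigenvalues λ₁ ≥ ⋯ ≥ λₙ and μ₁ ≥ ⋯ ≥ μₙ respectively. Then ∑ᵢ (λᵢ - μᵢ)² ≤ ‖A - B‖_F², where ‖·‖_F is the Frobenius norm. -/

import Mathlib

open Finset Matrix

/-- Rearrangement: for two antitone sequences, the aligned sum of squared differences
is minimal among permutations. -/
lemma hw_rearrange {n : ℕ} (lam mu : Fin n → ℝ) (hlam : Antitone lam) (hmu : Antitone mu)
    (σ : Equiv.Perm (Fin n)) :
    ∑ i, (lam i - mu i) ^ 2 ≤ ∑ i, (lam i - mu (σ i)) ^ 2 := by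
  have hmono : Monovary lam mu := by
    intro i j hij
    rcases le_total i j with h | h
    · exact absurd (hmu h) (not_le.2 hij)
    · exact hlam h
  have hre : ∑ i, lam i * mu (σ i) ≤ ∑ i, lam i * mu i := by
    simpa [smul_eq_mul] using hmono.sum_smul_comp_perm_le_sum_smul (σ := σ)
  have expand : ∀ g : Fin n → ℝ,
      ∑ i, (lam i - g i) ^ 2 = ∑ i, lam i ^ 2 + ∑ i, g i ^ 2 - 2 * ∑ i, lam i * g i := by
    intro g
    rw [Finset.mul_sum, ← Finset.sum_add_distrib, ← Finset.sum_sub_distrib]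
    refine Finset.sum_congr rfl fun i _ => by ring
  have h1 : ∑ i, (mu (σ i)) ^ 2 = ∑ i, mu i ^ 2 :=
    Equiv.sum_comp σ (fun i => mu i ^ 2)
  rw [expand mu, expand (fun i => mu (σ i))]
  rw [h1]
  linarith

/-- Key inequality against a doubly stochastic matrix, via Birkhoff's theorem. -/
lemma hw_doublyStochastic {n : ℕ} (lam mu : Fin n → ℝ) (hlam : Antitone lam) (hmu : Antitone mu)
    (S : Matrix (Fin n) (Fin n) ℝ) (hS : S ∈ doublyStochastic ℝ (Fin n)) :
    ∑ i, (lam i - mu i) ^ 2 ≤ ∑ i, ∑ j, (lam i - mu j) ^ 2 * S i j := by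
  obtain ⟨w, hw0, hw1, hwS⟩ := exists_eq_sum_perm_of_mem_doublyStochastic hS
  have hperm : ∀ σ : Equiv.Perm (Fin n),
      ∑ i, ∑ j, (lam i - mu j) ^ 2 * (σ.permMatrix ℝ) i j = ∑ i, (lam i - mu (σ i)) ^ 2 := by
    intro σ
    refine Finset.sum_congr rfl fun i _ => ?_
    simp [Equiv.Perm.permMatrix, PEquiv.toMatrix_apply, Equiv.toPEquiv_apply,
      Option.mem_def, mul_ite, mul_one, mul_zero, Finset.sum_ite_eq, Finset.mem_univ]
  calc ∑ i, (lam i - mu i) ^ 2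
      = ∑ σ : Equiv.Perm (Fin n), w σ * ∑ i, (lam i - mu i) ^ 2 := by
        rw [← Finset.sum_mul, hw1, one_mul]
    _ ≤ ∑ σ : Equiv.Perm (Fin n), w σ * ∑ i, (lam i - mu (σ i)) ^ 2 := by
        refine Finset.sum_le_sum fun σ _ => ?_
        exact mul_le_mul_of_nonneg_left (hw_rearrange lam mu hlam hmu σ) (hw0 σ)
    _ = ∑ σ : Equiv.Perm (Fin n), w σ * ∑ i, ∑ j, (lam i - mu j) ^ 2 * (σ.permMatrix ℝ) i j := by
        exact Finset.sum_congr rfl fun σ _ => by rw [hperm]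
    _ = ∑ i, ∑ j, (lam i - mu j) ^ 2 * ∑ σ : Equiv.Perm (Fin n), w σ * (σ.permMatrix ℝ) i j := by
        simp only [Finset.mul_sum]
        rw [Finset.sum_comm]
        refine Finset.sum_congr rfl fun i _ => ?_
        rw [Finset.sum_comm]
        refine Finset.sum_congr rfl fun j _ => ?_
        exact Finset.sum_congr rfl fun σ _ => by ring
    _ = ∑ i, ∑ j, (lam i - mu j) ^ 2 * S i j := by
        refine Finset.sum_congr rfl fun i _ => Finset.sum_congr rfl fun j _ => ?_
        congr 1
        rw [← hwS]
        simp [Matrix.sum_apply, smul_eq_mul]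

/-- Squared Frobenius norm as a trace. -/
lemma hw_frob {n : ℕ} (M : Matrix (Fin n) (Fin n) ℝ) :
    ∑ i, ∑ j, (M i j) ^ 2 = (Mᴴ * M).trace := by
  rw [Matrix.trace]
  simp only [Matrix.diag_apply, Matrix.mul_apply, Matrix.conjTranspose_apply, star_trivial]
  rw [Finset.sum_comm]
  simp [sq]

/-- Hoffman–Wielandt inequality for real symmetric matrices, for the
decreasingly-ordered eigenvalue sequences. -/
theorem hoffman_wielandt (n : ℕ) (A B : Matrix (Fin n) (Fin n) ℝ)
    (hA : A.IsHermitian) (hB : B.IsHermitian)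
    (lam mu : Fin n → ℝ) (hlam : Antitone lam) (hmu : Antitone mu)
    (hlamA : ∃ σ : Equiv.Perm (Fin n), lam = hA.eigenvalues ∘ σ)
    (hmuB : ∃ σ : Equiv.Perm (Fin n), mu = hB.eigenvalues ∘ σ) :
    ∑ i, (lam i - mu i) ^ 2 ≤ ∑ i, ∑ j, (A i j - B i j) ^ 2 := by
  classical
  obtain ⟨σ, hσ⟩ := hlamA
  obtain ⟨τ, hτ⟩ := hmuB
  set α := hA.eigenvalues with hα
  set β := hB.eigenvalues with hβ
  set U : Matrix (Fin n) (Fin n) ℝ := (hA.eigenvectorUnitary : Matrix (Fin n) (Fin n) ℝ) with hUdef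
  set V : Matrix (Fin n) (Fin n) ℝ := (hB.eigenvectorUnitary : Matrix (Fin n) (Fin n) ℝ) with hVdef
  have hU1 : star U * U = 1 := Matrix.mem_unitaryGroup_iff'.mp hA.eigenvectorUnitary.2
  have hU2 : U * star U = 1 := Matrix.mem_unitaryGroup_iff.mp hA.eigenvectorUnitary.2
  have hV1 : star V * V = 1 := Matrix.mem_unitaryGroup_iff'.mp hB.eigenvectorUnitary.2
  have hV2 : V * star V = 1 := Matrix.mem_unitaryGroup_iff.mp hB.eigenvectorUnitary.2
  set W : Matrix (Fin n) (Fin n) ℝ := star U * V with hWdef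
  have hW1 : star W * W = 1 := by
    rw [hWdef, StarMul.star_mul, star_star, mul_assoc, ← mul_assoc U, hU2, one_mul, hV1]
  have hW2 : W * star W = 1 := by
    rw [hWdef, StarMul.star_mul, star_star, mul_assoc, ← mul_assoc V, hV2, one_mul, hU1]
  -- diagonalizations
  have hAdiag : star U * A * U = Matrix.diagonal α := by
    have h := hA.conjStarAlgAut_star_eigenvectorUnitary
    rw [Unitary.conjStarAlgAut_star_apply] at h
    simpa only [RCLike.ofReal_real_eq_id, Function.id_comp] using h
  have hBdiag : star V * B * V = Matrix.diagonal β := by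
    have h := hB.conjStarAlgAut_star_eigenvectorUnitary
    rw [Unitary.conjStarAlgAut_star_apply] at h
    simpa only [RCLike.ofReal_real_eq_id, Function.id_comp] using h
  set M : Matrix (Fin n) (Fin n) ℝ := A - B with hMdef
  set M' : Matrix (Fin n) (Fin n) ℝ := star U * M * V with hM'def
  -- entrywise formula for M'
  have e1 : star U * A * V = Matrix.diagonal α * W := by
    calc star U * A * V = star U * A * (U * star U) * V := by rw [hU2, mul_one]
      _ = (star U * A * U) * (star U * V) := by simp only [mul_assoc]
      _ = Matrix.diagonal α * W := by rw [hAdiag, ← hWdef]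
  have e2 : star U * B * V = W * Matrix.diagonal β := by
    calc star U * B * V = star U * (V * star V) * B * V := by rw [hV2, mul_one]
      _ = (star U * V) * (star V * B * V) := by simp only [mul_assoc]
      _ = W * Matrix.diagonal β := by rw [hBdiag, ← hWdef]
  have hM'entry : ∀ i j, M' i j = (α i - β j) * W i j := by
    intro i j
    have hM'eq : M' = Matrix.diagonal α * W - W * Matrix.diagonal β := by
      rw [hM'def, hMdef, Matrix.mul_sub, Matrix.sub_mul, e1, e2]
    rw [hM'eq, Matrix.sub_apply, Matrix.diagonal_mul, Matrix.mul_diagonal]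
    ring
  -- Frobenius norm invariance
  have hsU : (star U)ᴴ = U := by rw [← Matrix.star_eq_conjTranspose, star_star]
  have hfrob : ∑ i, ∑ j, (M i j) ^ 2 = ∑ i, ∑ j, (M' i j) ^ 2 := by
    rw [hw_frob, hw_frob]
    have hTT : M'ᴴ * M' = star V * (Mᴴ * M) * V := by
      rw [hM'def, Matrix.conjTranspose_mul, Matrix.conjTranspose_mul, hsU,
        ← Matrix.star_eq_conjTranspose V]
      calc star V * (Mᴴ * U) * (star U * M * V)
          = star V * (Mᴴ * (U * (star U * (M * V)))) := by simp only [mul_assoc]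
        _ = star V * (Mᴴ * ((U * star U) * (M * V))) := by simp only [mul_assoc]
        _ = star V * (Mᴴ * M) * V := by rw [hU2, one_mul]; simp only [mul_assoc]
    rw [hTT, Matrix.trace_mul_cycle, ← mul_assoc, hV2, one_mul]
  -- doubly stochastic matrix from W, reindexed by σ and τ
  set S : Matrix (Fin n) (Fin n) ℝ := fun i j => (W (σ i) (τ j)) ^ 2 with hSdef
  have hWrow : ∀ i, ∑ j, (W i j) ^ 2 = 1 := by
    intro i
    have h : (W * star W) i i = 1 := by rw [hW2]; simp
    rw [Matrix.mul_apply] at h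
    simp only [Matrix.star_apply, star_trivial] at h
    rw [← h]
    exact Finset.sum_congr rfl fun j _ => by ring
  have hWcol : ∀ j, ∑ i, (W i j) ^ 2 = 1 := by
    intro j
    have h : (star W * W) j j = 1 := by rw [hW1]; simp
    rw [Matrix.mul_apply] at h
    simp only [Matrix.star_apply, star_trivial] at h
    rw [← h]
    exact Finset.sum_congr rfl fun i _ => by ring
  have hSds : S ∈ doublyStochastic ℝ (Fin n) := by
    rw [mem_doublyStochastic_iff_sum]
    refine ⟨fun i j => sq_nonneg _, fun i => ?_, fun j => ?_⟩
    · simpa using (Equiv.sum_comp τ (fun j => (W (σ i) j) ^ 2)).trans (hWrow (σ i))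
    · simpa using (Equiv.sum_comp σ (fun i => (W i (τ j)) ^ 2)).trans (hWcol (τ j))
  -- main chain
  have key : ∑ i, ∑ j, (M' i j) ^ 2 = ∑ i, ∑ j, (lam i - mu j) ^ 2 * S i j := by
    have step : ∑ i, ∑ j, (M' i j) ^ 2 = ∑ i, ∑ j, (α i - β j) ^ 2 * (W i j) ^ 2 := by
      refine Finset.sum_congr rfl fun i _ => Finset.sum_congr rfl fun j _ => ?_
      rw [hM'entry i j]; ring
    rw [step]
    rw [← Equiv.sum_comp σ (fun i => ∑ j, (α i - β j) ^ 2 * (W i j) ^ 2)]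
    refine Finset.sum_congr rfl fun i _ => ?_
    rw [← Equiv.sum_comp τ (fun j => (α (σ i) - β j) ^ 2 * (W (σ i) j) ^ 2)]
    refine Finset.sum_congr rfl fun j _ => ?_
    simp [hσ, hτ, hSdef]
  calc ∑ i, (lam i - mu i) ^ 2
      ≤ ∑ i, ∑ j, (lam i - mu j) ^ 2 * S i j := hw_doublyStochastic lam mu hlam hmu S hSds
    _ = ∑ i, ∑ j, (M' i j) ^ 2 := key.symm
    _ = ∑ i, ∑ j, (M i j) ^ 2 := hfrob.symm
    _ = ∑ i, ∑ j, (A i j - B i j) ^ 2 := by rw [hMdef]; simp [Matrix.sub_apply]
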